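/- Bound of the mixing coefficient via the φ-mixing coefficient: for all q ≥ p ≥ 1, ϖ_{q,p}(𝓖,𝓗) ≤ 2^{1 + 1/p}(φ(𝓖,𝓗))^{1 − 1/p}. -/

import Mathlib

open MeasureTheory Filter Set ProbabilityTheory
open scoped ENNReal NNReal Topology

noncomputable section

/-- The mixing coefficient `ϖ_{q,p}(𝓖,𝓗)`. -/
def varpi {Ω : Type*} {mΩ : MeasurableSpace Ω} (P : Measure Ω)
    (G H : MeasurableSpace Ω) (q p : ℝ≥0∞) : ℝ≥0∞ :=
  ⨆ g : {g : Ω → ℝ // Measurable[H] g ∧ eLpNorm g q P ≤ 1},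
    eLpNorm (fun ω => (P[g.1|G]) ω - ∫ x, g.1 x ∂P) p P

/-- `α(𝓖,𝓗) = ϖ_{∞,1}(𝓖,𝓗)/4`. -/
def alphaMix {Ω : Type*} {mΩ : MeasurableSpace Ω} (P : Measure Ω)
    (G H : MeasurableSpace Ω) : ℝ≥0∞ := varpi P G H ⊤ 1 / 4

/-- `ρ(𝓖,𝓗) = ϖ_{2,2}(𝓖,𝓗)`. -/
def rhoMix {Ω : Type*} {mΩ : MeasurableSpace Ω} (P : Measure Ω)
    (G H : MeasurableSpace Ω) : ℝ≥0∞ := varpi P G H 2 2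

/-- `φ(𝓖,𝓗) = ϖ_{∞,∞}(𝓖,𝓗)/2`. -/
def phiMix {Ω : Type*} {mΩ : MeasurableSpace Ω} (P : Measure Ω)
    (G H : MeasurableSpace Ω) : ℝ≥0∞ := varpi P G H ⊤ ⊤ / 2

/-- `ψ(𝓖,𝓗) = ϖ_{1,∞}(𝓖,𝓗)`. -/
def psiMix {Ω : Type*} {mΩ : MeasurableSpace Ω} (P : Measure Ω)
    (G H : MeasurableSpace Ω) : ℝ≥0∞ := varpi P G H 1 ⊤

section Aux

variable {Ω : Type*} {mΩ : MeasurableSpace Ω} {P : Measure Ω} [IsProbabilityMeasure P]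
  {G H : MeasurableSpace Ω}

/-- Finite Hölder/Jensen step in `ℝ≥0∞`. -/
private lemma enn_holder {ι : Type*} (s : Finset ι) (t x : ι → ℝ≥0∞) (hx : ∀ y, x y ≠ ∞)
    (c : ℝ≥0∞) (hc : ∑ y ∈ s, x y ≤ c) {r : ℝ} (hr : 1 ≤ r) :
    (∑ y ∈ s, t y * x y) ^ r ≤ c ^ (r - 1) * ∑ y ∈ s, t y ^ r * x y := by
  rcases eq_or_ne (∑ y ∈ s, x y) 0 with hS | hS
  · have hx0 : ∀ y ∈ s, x y = 0 := Finset.sum_eq_zero_iff.mp hS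
    have h0 : ∑ y ∈ s, t y * x y = 0 :=
      Finset.sum_eq_zero fun y hy => by rw [hx0 y hy, mul_zero]
    rw [h0, ENNReal.zero_rpow_of_pos (by linarith)]
    exact zero_le
  · set S := ∑ y ∈ s, x y with hSdef
    have hStop : S ≠ ∞ := by
      rw [hSdef]
      exact (ENNReal.sum_lt_top.mpr fun y _ => (hx y).lt_top).ne
    have hw : ∑ y ∈ s, x y / S = 1 := by
      simp_rw [div_eq_mul_inv]
      rw [← Finset.sum_mul, ← hSdef, ENNReal.mul_inv_cancel hS hStop]
    have h := ENNReal.rpow_arith_mean_le_arith_mean_rpow (s := s) (fun y => x y / S) t hw hr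
    have hLHS : ∑ y ∈ s, t y * x y = S * ∑ y ∈ s, x y / S * t y := by
      rw [Finset.mul_sum]
      refine Finset.sum_congr rfl fun y hy => ?_
      rw [← mul_assoc, ENNReal.mul_div_cancel hS hStop, mul_comm]
    have hRHS : ∑ y ∈ s, x y / S * t y ^ r = S⁻¹ * ∑ y ∈ s, t y ^ r * x y := by
      rw [Finset.mul_sum]
      refine Finset.sum_congr rfl fun y hy => ?_
      rw [div_eq_mul_inv]
      ring
    calc (∑ y ∈ s, t y * x y) ^ r = (S * ∑ y ∈ s, x y / S * t y) ^ r := by rw [hLHS]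
      _ = S ^ r * (∑ y ∈ s, x y / S * t y) ^ r := ENNReal.mul_rpow_of_nonneg _ _ (by linarith)
      _ ≤ S ^ r * ∑ y ∈ s, x y / S * t y ^ r := mul_le_mul_right h _
      _ = S ^ r * S⁻¹ * ∑ y ∈ s, t y ^ r * x y := by rw [hRHS, mul_assoc]
      _ = S ^ (r - 1) * ∑ y ∈ s, t y ^ r * x y := by
          rw [ENNReal.rpow_sub _ _ hS hStop, ENNReal.rpow_one, div_eq_mul_inv]
      _ ≤ c ^ (r - 1) * ∑ y ∈ s, t y ^ r * x y := by
          exact mul_le_mul_left (ENNReal.rpow_le_rpow hc (by linarith)) _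

private lemma lint_mu_le (hG : G ≤ mΩ) {B : Set Ω} (hB : MeasurableSet[mΩ] B) :
    ∫⁻ ω, ‖(P[B.indicator (fun _ => (1 : ℝ))|G]) ω - (P B).toReal‖₊ ∂P ≤ 2 * P B := by
  letI : MeasurableSpace Ω := mΩ
  set E := P[B.indicator (fun _ => (1 : ℝ))|G] with hE
  have hint : Integrable (B.indicator fun _ => (1 : ℝ)) P := (integrable_const 1).indicator hB
  have hnn : 0 ≤ᵐ[P] E :=
    condExp_nonneg (Eventually.of_forall fun ω => Set.indicator_nonneg (fun _ _ => zero_le_one) ω)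
  have hintE : ∫ ω, E ω ∂P = (P B).toReal := by
    rw [hE, integral_condExp hG, integral_indicator_const (1 : ℝ) hB, smul_eq_mul, mul_one, measureReal_def]
  have h1 : ∫⁻ ω, (‖E ω‖₊ : ℝ≥0∞) ∂P = P B := by
    have heq : ∫⁻ ω, (‖E ω‖₊ : ℝ≥0∞) ∂P = ∫⁻ ω, ENNReal.ofReal (E ω) ∂P :=
      lintegral_congr_ae (hnn.mono fun ω h => Real.enorm_eq_ofReal h)
    rw [heq, ← ofReal_integral_eq_lintegral_ofReal integrable_condExp hnn, hintE,
      ENNReal.ofReal_toReal (measure_ne_top P B)]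
  calc ∫⁻ ω, (‖E ω - (P B).toReal‖₊ : ℝ≥0∞) ∂P
      ≤ ∫⁻ ω, ((‖E ω‖₊ : ℝ≥0∞) + (‖((P B).toReal : ℝ)‖₊ : ℝ≥0∞)) ∂P := by
        refine lintegral_mono fun ω => ?_
        calc (‖E ω - (P B).toReal‖₊ : ℝ≥0∞)
            ≤ ((‖E ω‖₊ + ‖((P B).toReal : ℝ)‖₊ : ℝ≥0) : ℝ≥0∞) :=
              ENNReal.coe_le_coe.mpr (nnnorm_sub_le _ _)
          _ = _ := ENNReal.coe_add _ _
    _ = P B + P B := by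
        rw [lintegral_add_right _ measurable_const, h1, lintegral_const, measure_univ, mul_one,
          ← enorm_eq_nnnorm, Real.enorm_eq_ofReal ENNReal.toReal_nonneg, ENNReal.ofReal_toReal (measure_ne_top P B)]
    _ = 2 * P B := (two_mul _).symm

private lemma key_simple (hG : G ≤ mΩ) (hH : H ≤ mΩ) (s : @SimpleFunc Ω H ℝ)
    {p : ℝ≥0∞} (hp : 1 ≤ p) (hptop : p ≠ ∞) :
    eLpNorm (fun ω => (P[⇑s|G]) ω - ∫ x, s x ∂P) p P ≤
      2 ^ p.toReal⁻¹ * (varpi P G H ⊤ ⊤) ^ (1 - p.toReal⁻¹) * eLpNorm (⇑s) p P := by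
  letI : MeasurableSpace Ω := mΩ
  have hp0 : p ≠ 0 := (lt_of_lt_of_le zero_lt_one hp).ne'
  set r := p.toReal with hrdef
  have hr1 : (1 : ℝ) ≤ r := by
    rw [hrdef, ← ENNReal.toReal_one]
    exact ENNReal.toReal_mono hptop hp
  have hr0 : (0 : ℝ) < r := lt_of_lt_of_le one_pos hr1
  set Φ := varpi P G H ⊤ ⊤ with hΦdef
  set J : Finset ℝ := @SimpleFunc.range Ω ℝ H s with hJdef
  have hmemrange : ∀ ω : Ω, s ω ∈ J := fun ω => @SimpleFunc.mem_range_self Ω ℝ H s ω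
  set ι := {y : ℝ // y ∈ J} with hιdef
  set B : ι → Set Ω := fun y => ⇑s ⁻¹' {(y : ℝ)} with hBdef
  have hBH : ∀ y, MeasurableSet[H] (B y) := fun y => @SimpleFunc.measurableSet_fiber Ω ℝ H s _
  have hBm : ∀ y, MeasurableSet[mΩ] (B y) := fun y => hH _ (hBH y)
  set ind : ι → Ω → ℝ := fun y => (B y).indicator (fun _ => 1) with hinddef
  have hind_int : ∀ y, Integrable (ind y) P := fun y => (integrable_const 1).indicator (hBm y)
  have hindH : ∀ y, Measurable[H] (ind y) := fun y =>
    (@measurable_const ℝ Ω _ H 1).indicator (hBH y)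
  have hmem : ∀ ω : Ω, ω ∈ B (⟨s ω, hmemrange ω⟩ : ι) := fun ω => rfl
  have hsum : ∀ (c : ι → ℝ) (ω : Ω),
      (∑ y : ι, c y * ind y ω) = c ⟨s ω, hmemrange ω⟩ := by
    intro c ω
    rw [Finset.sum_eq_single_of_mem (⟨s ω, hmemrange ω⟩ : ι) (Finset.mem_univ _)]
    · rw [hinddef]
      simp only [Set.indicator_of_mem (hmem ω), mul_one]
    · intro y _ hy
      have hne : ω ∉ B y := by
        rw [hBdef]
        simp only [Set.mem_preimage, Set.mem_singleton_iff]
        intro h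
        exact hy (Subtype.ext h.symm)
      rw [hinddef]
      simp only [Set.indicator_of_notMem hne, mul_zero]
  set μy : ι → Ω → ℝ := fun y ω => (P[ind y|G]) ω - (P (B y)).toReal with hμydef
  have hdecomp : ∀ c : ι → ℝ,
      (fun ω => (P[fun ω' => ∑ y : ι, c y * ind y ω'|G]) ω
        - ∫ x, (∑ y : ι, c y * ind y x) ∂P) =ᵐ[P] fun ω => ∑ y : ι, c y * μy y ω := by
    intro c
    have hfun : (fun ω' => ∑ y : ι, c y * ind y ω') = ∑ y : ι, c y • ind y := by
      funext ω'
      rw [Finset.sum_apply]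
      simp [smul_eq_mul]
    have h1 : P[fun ω' => ∑ y : ι, c y * ind y ω'|G] =ᵐ[P] ∑ y : ι, P[c y • ind y|G] := by
      rw [hfun]
      exact condExp_finset_sum (fun y _ => (hind_int y).smul (c y)) G
    have h2 : ∀ᵐ ω ∂P, ∀ y : ι, (P[c y • ind y|G]) ω = c y * (P[ind y|G]) ω := by
      rw [ae_all_iff]
      intro y
      filter_upwards [condExp_smul (c y) (ind y) G] with ω hω
      rw [hω, Pi.smul_apply, smul_eq_mul]
    have h3 : ∫ x, (∑ y : ι, c y * ind y x) ∂P = ∑ y : ι, c y * (P (B y)).toReal := by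
      rw [integral_finset_sum _ fun y _ => (hind_int y).const_mul _]
      refine Finset.sum_congr rfl fun y _ => ?_
      rw [integral_const_mul, hinddef, integral_indicator_const (1 : ℝ) (hBm y), smul_eq_mul,
        mul_one, measureReal_def]
    filter_upwards [h1, h2] with ω hω1 hω2
    rw [hω1, h3, Finset.sum_apply]
    rw [Finset.sum_congr rfl fun y (_ : y ∈ Finset.univ) => hω2 y, ← Finset.sum_sub_distrib]
    exact Finset.sum_congr rfl fun y _ => by rw [hμydef, mul_sub]
  have hpattern : ∀ σ : ι → Bool,
      ∀ᵐ ω ∂P, (‖∑ y : ι, (if σ y then (1 : ℝ) else -1) * μy y ω‖₊ : ℝ≥0∞) ≤ Φ := by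
    intro σ
    set ε : ι → ℝ := fun y => if σ y then 1 else -1 with hεdef
    have hmeasσ : Measurable[H] fun ω => ∑ y : ι, ε y * ind y ω := by
      exact Finset.measurable_sum _ fun y _ => ((hindH y).const_mul (ε y))
    have hboundσ : eLpNorm (fun ω => ∑ y : ι, ε y * ind y ω) ⊤ P ≤ 1 := by
      have hb : ∀ ω, ‖∑ y : ι, ε y * ind y ω‖ ≤ 1 := by
        intro ω
        rw [hsum ε ω]
        by_cases hb : σ ⟨s ω, hmemrange ω⟩ <;> simp [hεdef, hb]
      calc eLpNorm (fun ω => ∑ y : ι, ε y * ind y ω) ⊤ P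
          ≤ P Set.univ ^ (⊤ : ℝ≥0∞).toReal⁻¹ * ENNReal.ofReal 1 :=
            eLpNorm_le_of_ae_bound (Eventually.of_forall hb)
        _ = 1 := by simp
    have hle : eLpNorm (fun ω => (P[fun ω' => ∑ y : ι, ε y * ind y ω'|G]) ω
        - ∫ x, (∑ y : ι, ε y * ind y x) ∂P) ⊤ P ≤ Φ := by
      rw [hΦdef, varpi]
      exact le_iSup (fun g : {g : Ω → ℝ // Measurable[H] g ∧ eLpNorm g ⊤ P ≤ 1} =>
        eLpNorm (fun ω => (P[g.1|G]) ω - ∫ x, g.1 x ∂P) ⊤ P) ⟨_, hmeasσ, hboundσ⟩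
    rw [eLpNorm_exponent_top] at hle
    have hae := enorm_ae_le_eLpNormEssSup (fun ω => (P[fun ω' => ∑ y : ι, ε y * ind y ω'|G]) ω
        - ∫ x, (∑ y : ι, ε y * ind y x) ∂P) P
    filter_upwards [hae, hdecomp ε] with ω h₁ h₂
    rw [← h₂]
    exact h₁.trans hle
  have hΛ : ∀ᵐ ω ∂P, (∑ y : ι, (‖μy y ω‖₊ : ℝ≥0∞)) ≤ Φ := by
    filter_upwards [ae_all_iff.mpr hpattern] with ω hω
    set σ : ι → Bool := fun y => decide (0 ≤ μy y ω) with hσdef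
    have h1 : ∑ y : ι, (‖μy y ω‖₊ : ℝ≥0∞) = ENNReal.ofReal (∑ y : ι, |μy y ω|) := by
      rw [ENNReal.ofReal_sum_of_nonneg fun y _ => abs_nonneg _]
      exact Finset.sum_congr rfl fun y _ => Real.enorm_eq_ofReal_abs _
    have h2 : (∑ y : ι, |μy y ω|) = ∑ y : ι, (if σ y then (1 : ℝ) else -1) * μy y ω := by
      refine Finset.sum_congr rfl fun y _ => ?_
      by_cases h : 0 ≤ μy y ω
      · simp [hσdef, h, abs_of_nonneg h]
      · have h' : μy y ω < 0 := lt_of_not_ge h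
        simp [hσdef, h, abs_of_neg h']
    rw [h1, h2]
    calc ENNReal.ofReal (∑ y : ι, (if σ y then (1 : ℝ) else -1) * μy y ω)
        ≤ (‖∑ y : ι, (if σ y then (1 : ℝ) else -1) * μy y ω‖₊ : ℝ≥0∞) := by
          rw [← enorm_eq_nnnorm, Real.enorm_eq_ofReal_abs]
          exact ENNReal.ofReal_le_ofReal (le_abs_self _)
      _ ≤ Φ := hω σ
  have hs_eq : ⇑s = fun ω => ∑ y : ι, (y : ℝ) * ind y ω :=
    funext fun ω => (hsum (fun y => (y : ℝ)) ω).symm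
  have hF : (fun ω => (P[⇑s|G]) ω - ∫ x, s x ∂P) =ᵐ[P] fun ω => ∑ y : ι, (y : ℝ) * μy y ω := by
    rw [hs_eq]
    exact hdecomp fun y => (y : ℝ)
  have hmeas_y : ∀ y : ι, Measurable fun ω => (‖μy y ω‖₊ : ℝ≥0∞) := fun y =>
    ((stronglyMeasurable_condExp.mono hG).measurable.sub measurable_const).nnnorm.coe_nnreal_ennreal
  have hsnorm : ∑ y : ι, (‖(y : ℝ)‖₊ : ℝ≥0∞) ^ r * P (B y)
      = ∫⁻ ω, (‖s ω‖₊ : ℝ≥0∞) ^ r ∂P := by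
    have hpt : ∀ ω, (‖s ω‖₊ : ℝ≥0∞) ^ r
        = ∑ y : ι, (B y).indicator (fun _ => (‖(y : ℝ)‖₊ : ℝ≥0∞) ^ r) ω := by
      intro ω
      rw [Finset.sum_eq_single_of_mem (⟨s ω, hmemrange ω⟩ : ι) (Finset.mem_univ _)]
      · rw [Set.indicator_of_mem (hmem ω)]
      · intro y _ hy
        have hne : ω ∉ B y := by
          rw [hBdef]
          simp only [Set.mem_preimage, Set.mem_singleton_iff]
          intro h
          exact hy (Subtype.ext h.symm)
        rw [Set.indicator_of_notMem hne]
    simp_rw [hpt]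
    rw [lintegral_finset_sum _ fun y _ => measurable_const.indicator (hBm y)]
    exact Finset.sum_congr rfl fun y _ => (lintegral_indicator_const (hBm y) _).symm
  have hkey : ∫⁻ ω, (‖(P[⇑s|G]) ω - ∫ x, s x ∂P‖₊ : ℝ≥0∞) ^ r ∂P
      ≤ Φ ^ (r - 1) * (2 * ∫⁻ ω, (‖s ω‖₊ : ℝ≥0∞) ^ r ∂P) := by
    have step1 : ∫⁻ ω, (‖(P[⇑s|G]) ω - ∫ x, s x ∂P‖₊ : ℝ≥0∞) ^ r ∂P
        ≤ ∫⁻ ω, Φ ^ (r - 1) * ∑ y : ι, (‖(y : ℝ)‖₊ : ℝ≥0∞) ^ r * (‖μy y ω‖₊ : ℝ≥0∞) ∂P := by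
      refine lintegral_mono_ae ?_
      filter_upwards [hF, hΛ] with ω h₁ h₂
      calc (‖(P[⇑s|G]) ω - ∫ x, s x ∂P‖₊ : ℝ≥0∞) ^ r
          = (‖∑ y : ι, (y : ℝ) * μy y ω‖₊ : ℝ≥0∞) ^ r := by rw [h₁]
        _ ≤ (∑ y : ι, (‖(y : ℝ)‖₊ : ℝ≥0∞) * (‖μy y ω‖₊ : ℝ≥0∞)) ^ r := by
            refine ENNReal.rpow_le_rpow ?_ (by linarith)
            calc (‖∑ y : ι, (y : ℝ) * μy y ω‖₊ : ℝ≥0∞)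
                ≤ ((∑ y : ι, ‖(y : ℝ) * μy y ω‖₊ : ℝ≥0) : ℝ≥0∞) :=
                  ENNReal.coe_le_coe.mpr (nnnorm_sum_le _ _)
              _ = ∑ y : ι, (‖(y : ℝ)‖₊ : ℝ≥0∞) * (‖μy y ω‖₊ : ℝ≥0∞) := by
                  push_cast [nnnorm_mul]
                  rfl
        _ ≤ Φ ^ (r - 1) * ∑ y : ι, (‖(y : ℝ)‖₊ : ℝ≥0∞) ^ r * (‖μy y ω‖₊ : ℝ≥0∞) :=
            enn_holder Finset.univ _ _ (fun y => ENNReal.coe_ne_top) Φ h₂ hr1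
    have hmeas_sum : Measurable fun ω => ∑ y : ι, (‖(y : ℝ)‖₊ : ℝ≥0∞) ^ r * (‖μy y ω‖₊ : ℝ≥0∞) :=
      Finset.measurable_sum _ fun y _ => (hmeas_y y).const_mul _
    calc ∫⁻ ω, (‖(P[⇑s|G]) ω - ∫ x, s x ∂P‖₊ : ℝ≥0∞) ^ r ∂P
        ≤ ∫⁻ ω, Φ ^ (r - 1) * ∑ y : ι, (‖(y : ℝ)‖₊ : ℝ≥0∞) ^ r * (‖μy y ω‖₊ : ℝ≥0∞) ∂P := step1
      _ = Φ ^ (r - 1) * ∑ y : ι, (‖(y : ℝ)‖₊ : ℝ≥0∞) ^ r * ∫⁻ ω, (‖μy y ω‖₊ : ℝ≥0∞) ∂P := by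
          rw [lintegral_const_mul _ hmeas_sum]
          congr 1
          rw [lintegral_finset_sum _ fun y _ => (hmeas_y y).const_mul _]
          exact Finset.sum_congr rfl fun y _ => lintegral_const_mul _ (hmeas_y y)
      _ ≤ Φ ^ (r - 1) * ∑ y : ι, (‖(y : ℝ)‖₊ : ℝ≥0∞) ^ r * (2 * P (B y)) := by
          refine mul_le_mul_right (Finset.sum_le_sum fun y _ => mul_le_mul_right ?_ _) _
          exact lint_mu_le hG (hBm y)
      _ = Φ ^ (r - 1) * (2 * ∑ y : ι, (‖(y : ℝ)‖₊ : ℝ≥0∞) ^ r * P (B y)) := by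
          congr 1
          rw [Finset.mul_sum]
          exact Finset.sum_congr rfl fun y _ => by ring
      _ = Φ ^ (r - 1) * (2 * ∫⁻ ω, (‖s ω‖₊ : ℝ≥0∞) ^ r ∂P) := by rw [hsnorm]
  rw [eLpNorm_eq_lintegral_rpow_enorm_toReal hp0 hptop, eLpNorm_eq_lintegral_rpow_enorm_toReal hp0 hptop]
  rw [← hrdef]
  calc (∫⁻ ω, (‖(P[⇑s|G]) ω - ∫ x, s x ∂P‖₊ : ℝ≥0∞) ^ r ∂P) ^ (1 / r)
      ≤ (Φ ^ (r - 1) * (2 * ∫⁻ ω, (‖s ω‖₊ : ℝ≥0∞) ^ r ∂P)) ^ (1 / r) :=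
        ENNReal.rpow_le_rpow hkey (by positivity)
    _ = (Φ ^ (r - 1)) ^ (1 / r) * ((2 : ℝ≥0∞) ^ (1 / r)
        * (∫⁻ ω, (‖s ω‖₊ : ℝ≥0∞) ^ r ∂P) ^ (1 / r)) := by
        rw [ENNReal.mul_rpow_of_nonneg _ _ (by positivity),
          ENNReal.mul_rpow_of_nonneg _ _ (by positivity)]
    _ = 2 ^ r⁻¹ * Φ ^ (1 - r⁻¹) * (∫⁻ ω, (‖s ω‖₊ : ℝ≥0∞) ^ r ∂P) ^ (1 / r) := by
        rw [← ENNReal.rpow_mul]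
        have hexp : (r - 1) * (1 / r) = 1 - r⁻¹ := by
          field_simp
        rw [hexp, one_div]
        ring

end Aux

/-- Bound of `ϖ_{q,p}` via the `φ`-mixing coefficient. -/
theorem varpi_le_phi
    {Ω : Type*} {mΩ : MeasurableSpace Ω} (P : Measure Ω) [IsProbabilityMeasure P]
    (G H : MeasurableSpace Ω) (hG : G ≤ mΩ) (hH : H ≤ mΩ)
    (p q : ℝ≥0∞) (hp : 1 ≤ p) (hpq : p ≤ q) :
    varpi P G H q p ≤
      (2 : ℝ≥0∞) ^ (1 + p⁻¹.toReal) * phiMix P G H ^ (1 - p⁻¹.toReal) := by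
  have hΦeq : (2 : ℝ≥0∞) * phiMix P G H = varpi P G H ⊤ ⊤ := by
    rw [phiMix, mul_comm, ENNReal.div_mul_cancel two_ne_zero ENNReal.ofNat_ne_top]
  by_cases hptop : p = ∞
  · subst hptop
    have hq : q = ∞ := top_le_iff.mp hpq
    subst hq
    simp only [ENNReal.inv_top, ENNReal.toReal_zero, add_zero, sub_zero, ENNReal.rpow_one]
    rw [hΦeq]
  · have hp0 : p ≠ 0 := (lt_of_lt_of_le zero_lt_one hp).ne'
    set r := p.toReal with hrdef
    have hr1 : (1 : ℝ) ≤ r := by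
      rw [hrdef, ← ENNReal.toReal_one]
      exact ENNReal.toReal_mono hptop hp
    have hr0 : (0 : ℝ) < r := lt_of_lt_of_le one_pos hr1
    have hrinv : p⁻¹.toReal = r⁻¹ := by rw [ENNReal.toReal_inv, hrdef]
    rw [hrinv]
    set Φ := varpi P G H ⊤ ⊤ with hΦdef
    set K := (2 : ℝ≥0∞) ^ r⁻¹ * Φ ^ (1 - r⁻¹) with hKdef
    have hinv1 : r⁻¹ ≤ 1 := inv_le_one_of_one_le₀ hr1
    have hinv0 : (0 : ℝ) ≤ r⁻¹ := by positivity
    have hKle : K ≤ (2 : ℝ≥0∞) ^ (1 + r⁻¹) * phiMix P G H ^ (1 - r⁻¹) := by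
      have h1 : Φ ^ (1 - r⁻¹) = (2 : ℝ≥0∞) ^ (1 - r⁻¹) * phiMix P G H ^ (1 - r⁻¹) := by
        rw [← ENNReal.mul_rpow_of_nonneg _ _ (by linarith), hΦeq]
      have h2 : (2 : ℝ≥0∞) ^ r⁻¹ * (2 : ℝ≥0∞) ^ (1 - r⁻¹) = (2 : ℝ≥0∞) ^ (1 : ℝ) := by
        rw [← ENNReal.rpow_add _ _ two_ne_zero ENNReal.ofNat_ne_top]
        norm_num
      have h3 : (2 : ℝ≥0∞) ^ (1 : ℝ) ≤ (2 : ℝ≥0∞) ^ (1 + r⁻¹) :=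
        ENNReal.rpow_le_rpow_of_exponent_le one_le_two (by linarith)
      calc K = ((2 : ℝ≥0∞) ^ r⁻¹ * (2 : ℝ≥0∞) ^ (1 - r⁻¹)) * phiMix P G H ^ (1 - r⁻¹) := by
            rw [hKdef, h1]; ring
        _ ≤ (2 : ℝ≥0∞) ^ (1 + r⁻¹) * phiMix P G H ^ (1 - r⁻¹) := by
            rw [h2]; exact mul_le_mul_left h3 _
    refine le_trans (iSup_le ?_) hKle
    rintro ⟨g, hgH, hgq⟩
    simp only
    -- measurability facts
    have hgm : Measurable[mΩ] g := hgH.mono hH le_rfl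
    have hgsm : AEStronglyMeasurable[mΩ] g P := hgm.aestronglyMeasurable
    have hgp : eLpNorm g p P ≤ 1 := (eLpNorm_le_eLpNorm_of_exponent_le hpq hgsm).trans hgq
    have hgmem : MemLp g p P := ⟨hgsm, lt_of_le_of_lt hgp ENNReal.one_lt_top⟩
    have hgint : Integrable g P := hgmem.integrable hp
    have hgsmH : StronglyMeasurable[H] g := Measurable.stronglyMeasurable hgH
    have hgmem' : MemLp g p (P.trim hH) := by
      refine ⟨hgsmH.aestronglyMeasurable, ?_⟩
      rw [eLpNorm_trim hH hgsmH]
      exact lt_of_le_of_lt hgp ENNReal.one_lt_top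
    -- approximating simple functions
    have hex : ∀ n : ℕ, ∃ sf : @SimpleFunc Ω H ℝ,
        eLpNorm (g - ⇑sf) p (P.trim hH) < (2 : ℝ≥0∞)⁻¹ ^ n := by
      intro n
      obtain ⟨sf, h1, _⟩ := hgmem'.exists_simpleFunc_eLpNorm_sub_lt hptop
        (pow_ne_zero n (ENNReal.inv_ne_zero.mpr (ENNReal.ofNat_ne_top (n := 2))))
      exact ⟨sf, h1⟩
    choose sf hsf using hex
    have hsfsmH : ∀ n, StronglyMeasurable[H] (⇑(sf n)) := fun n =>
      @SimpleFunc.stronglyMeasurable Ω ℝ H _ (sf n)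
    have hsfm : ∀ n, Measurable[mΩ] (⇑(sf n)) := fun n => (hsfsmH n).measurable.mono hH le_rfl
    have hsfsm : ∀ n, AEStronglyMeasurable[mΩ] (⇑(sf n)) P := fun n => (hsfm n).aestronglyMeasurable
    have hsfint : ∀ n, Integrable (⇑(sf n)) P := by
      intro n
      have : MemLp (⇑(sf n)) p P := by
        constructor
        · exact hsfsm n
        · have hd : eLpNorm (g - ⇑(sf n)) p P < (2 : ℝ≥0∞)⁻¹ ^ n := by
            rw [← eLpNorm_trim hH (hgsmH.sub (hsfsmH n))]
            exact hsf n
          have : eLpNorm (⇑(sf n)) p P ≤ eLpNorm g p P + eLpNorm (g - ⇑(sf n)) p P := by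
            have heq : ⇑(sf n) = g - (g - ⇑(sf n)) := by ext ω; simp
            nth_rewrite 1 [heq]
            exact eLpNorm_sub_le hgsm (hgsm.sub (hsfsm n)) hp
          calc eLpNorm (⇑(sf n)) p P ≤ eLpNorm g p P + eLpNorm (g - ⇑(sf n)) p P := this
            _ < ⊤ := by
              apply ENNReal.add_lt_top.mpr
              exact ⟨lt_of_le_of_lt hgp ENNReal.one_lt_top,
                lt_of_lt_of_le hd (le_top)⟩
      exact this.integrable hp
    have hdp : ∀ n, eLpNorm (g - ⇑(sf n)) p P < (2 : ℝ≥0∞)⁻¹ ^ n := by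
      intro n
      rw [← eLpNorm_trim hH (hgsmH.sub (hsfsmH n))]
      exact hsf n
    have hsfnorm : ∀ n, eLpNorm (⇑(sf n)) p P ≤ 1 + (2 : ℝ≥0∞)⁻¹ ^ n := by
      intro n
      have heq : ⇑(sf n) = g - (g - ⇑(sf n)) := by ext ω; simp
      calc eLpNorm (⇑(sf n)) p P = eLpNorm (g - (g - ⇑(sf n))) p P := by rw [← heq]
        _ ≤ eLpNorm g p P + eLpNorm (g - ⇑(sf n)) p P :=
            eLpNorm_sub_le hgsm (hgsm.sub (hsfsm n)) hp
        _ ≤ 1 + (2 : ℝ≥0∞)⁻¹ ^ n := add_le_add hgp (hdp n).le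
    -- the functions
    set F : Ω → ℝ := fun ω => (P[g|G]) ω - ∫ x, g x ∂P with hFdef
    set Fn : ℕ → Ω → ℝ := fun n ω => (P[⇑(sf n)|G]) ω - ∫ x, sf n x ∂P with hFndef
    have hFm : AEStronglyMeasurable[mΩ] F P :=
      ((stronglyMeasurable_condExp.mono hG).aestronglyMeasurable).sub aestronglyMeasurable_const
    have hFnm : ∀ n, AEStronglyMeasurable[mΩ] (Fn n) P := fun n =>
      ((stronglyMeasurable_condExp.mono hG).aestronglyMeasurable).sub aestronglyMeasurable_const
    -- L¹ convergence of Fn to F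
    have hdiff : ∀ n, eLpNorm (Fn n - F) 1 P ≤ 2 * (2 : ℝ≥0∞)⁻¹ ^ n := by
      intro n
      have hd1 : eLpNorm (g - ⇑(sf n)) 1 P ≤ (2 : ℝ≥0∞)⁻¹ ^ n :=
        ((eLpNorm_le_eLpNorm_of_exponent_le hp (hgsm.sub (hsfsm n))).trans (hdp n).le)
      have hsplit : Fn n - F = (fun ω => (P[⇑(sf n)|G]) ω - (P[g|G]) ω)
          + (fun _ => ∫ x, g x ∂P - ∫ x, sf n x ∂P) := by
        ext ω
        simp only [Pi.add_apply, Pi.sub_apply, hFndef, hFdef]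
        ring
      have hA : eLpNorm (fun ω => (P[⇑(sf n)|G]) ω - (P[g|G]) ω) 1 P ≤ (2 : ℝ≥0∞)⁻¹ ^ n := by
        have hc : (fun ω => (P[⇑(sf n)|G]) ω - (P[g|G]) ω) =ᵐ[P] P[⇑(sf n) - g|G] := by
          filter_upwards [condExp_sub (hsfint n) hgint G] with ω hω
          rw [hω]; rfl
        rw [eLpNorm_congr_ae hc]
        calc eLpNorm (P[⇑(sf n) - g|G]) 1 P ≤ eLpNorm (⇑(sf n) - g) 1 P :=
              eLpNorm_one_condExp_le_eLpNorm _
          _ = eLpNorm (g - ⇑(sf n)) 1 P := by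
              rw [← eLpNorm_neg]; congr 1; ext ω; simp
          _ ≤ (2 : ℝ≥0∞)⁻¹ ^ n := hd1
      have hB : eLpNorm (fun _ : Ω => ∫ x, g x ∂P - ∫ x, sf n x ∂P) 1 P
          ≤ (2 : ℝ≥0∞)⁻¹ ^ n := by
        have hc : ∫ x, g x ∂P - ∫ x, sf n x ∂P = ∫ x, (g x - sf n x) ∂P :=
          (integral_sub hgint (hsfint n)).symm
        rw [eLpNorm_congr_ae (Eventually.of_forall fun ω => hc)]
        calc eLpNorm (fun _ : Ω => ∫ x, (g x - sf n x) ∂P) 1 P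
            = (‖∫ x, (g x - sf n x) ∂P‖₊ : ℝ≥0∞) := by
              rw [eLpNorm_const _ one_ne_zero (IsProbabilityMeasure.ne_zero P)]
              simp [measure_univ]
              rfl
          _ ≤ ∫⁻ x, (‖g x - sf n x‖₊ : ℝ≥0∞) ∂P := enorm_integral_le_lintegral_enorm _
          _ = eLpNorm (g - ⇑(sf n)) 1 P := by
              rw [eLpNorm_one_eq_lintegral_enorm]; rfl
          _ ≤ (2 : ℝ≥0∞)⁻¹ ^ n := hd1
      calc eLpNorm (Fn n - F) 1 P
          ≤ eLpNorm (fun ω => (P[⇑(sf n)|G]) ω - (P[g|G]) ω) 1 P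
            + eLpNorm (fun _ : Ω => ∫ x, g x ∂P - ∫ x, sf n x ∂P) 1 P := by
            rw [hsplit]
            exact eLpNorm_add_le
              (((stronglyMeasurable_condExp.mono hG).aestronglyMeasurable).sub
                ((stronglyMeasurable_condExp.mono hG).aestronglyMeasurable))
              aestronglyMeasurable_const le_rfl
        _ ≤ (2 : ℝ≥0∞)⁻¹ ^ n + (2 : ℝ≥0∞)⁻¹ ^ n := add_le_add hA hB
        _ = 2 * (2 : ℝ≥0∞)⁻¹ ^ n := (two_mul _).symm
    have hpowlim : Tendsto (fun n : ℕ => (2 : ℝ≥0∞)⁻¹ ^ n) atTop (𝓝 0) :=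
      ENNReal.tendsto_pow_atTop_nhds_zero_of_lt_one (ENNReal.inv_lt_one.mpr ENNReal.one_lt_two)
    have htends : Tendsto (fun n => eLpNorm (Fn n - F) 1 P) atTop (𝓝 0) := by
      have h2 : Tendsto (fun n : ℕ => 2 * (2 : ℝ≥0∞)⁻¹ ^ n) atTop (𝓝 0) := by
        have := ENNReal.Tendsto.const_mul hpowlim (Or.inr (ENNReal.ofNat_ne_top (n := 2)))
        rwa [mul_zero] at this
      exact tendsto_of_tendsto_of_tendsto_of_le_of_le tendsto_const_nhds h2
        (fun n => zero_le) hdiff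
    have htim : TendstoInMeasure P Fn atTop F :=
      tendstoInMeasure_of_tendsto_eLpNorm one_ne_zero hFnm hFm htends
    obtain ⟨ns, hns_mono, hns_ae⟩ := htim.exists_seq_tendsto_ae
    have hlim : eLpNorm F p P ≤ atTop.liminf fun n => eLpNorm (Fn (ns n)) p P :=
      MeasureTheory.Lp.eLpNorm_lim_le_liminf_eLpNorm (fun n => hFnm (ns n)) F hns_ae
    have hBnd : ∀ n, eLpNorm (Fn (ns n)) p P ≤ K * (1 + (2 : ℝ≥0∞)⁻¹ ^ n) := by
      intro n
      have h1 : eLpNorm (Fn (ns n)) p P ≤ K * eLpNorm (⇑(sf (ns n))) p P := by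
        rw [hKdef]
        have := key_simple (P := P) hG hH (sf (ns n)) hp hptop
        rw [← hrdef] at this
        exact this
      refine h1.trans (mul_le_mul_right ((hsfnorm (ns n)).trans (add_le_add le_rfl ?_)) K)
      exact pow_le_pow_of_le_one zero_le (ENNReal.inv_le_one.mpr one_le_two)
        (hns_mono.le_apply)
    have hliminf : (atTop.liminf fun n => eLpNorm (Fn (ns n)) p P) ≤ K := by
      have hmono : (atTop.liminf fun n => eLpNorm (Fn (ns n)) p P)
          ≤ atTop.liminf fun n => K * (1 + (2 : ℝ≥0∞)⁻¹ ^ n) :=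
        liminf_le_liminf (Eventually.of_forall hBnd)
      have htK : Tendsto (fun n : ℕ => K * (1 + (2 : ℝ≥0∞)⁻¹ ^ n)) atTop (𝓝 K) := by
        have h1 : Tendsto (fun n : ℕ => (1 : ℝ≥0∞) + (2 : ℝ≥0∞)⁻¹ ^ n) atTop (𝓝 1) := by
          have := Tendsto.add (tendsto_const_nhds (x := (1 : ℝ≥0∞))) hpowlim
          rwa [add_zero] at this
        have := ENNReal.Tendsto.const_mul (a := K) h1 (Or.inl one_ne_zero)
        rwa [mul_one] at this
      rw [← htK.liminf_eq]
      exact hmono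
    exact hlim.trans hliminf
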